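/- Suppose Q = S D S^{-1} where D is a positive diagonal matrix and S is invertible, and suppose Q = AB with A, B symmetric positive definite. Then there exists a positive definite matrix E commuting with D such that A = S E S^T and B = S^{-T} E^{-1} D S^{-1}. -/

import Mathlib

open Matrix

private lemma posDef_conj {n : Type*} [Fintype n] [DecidableEq n]
    {A C : Matrix n n ℝ} (hA : A.PosDef) (hC : IsUnit C) : (C * A * Cᵀ).PosDef := by
  have hCT : IsUnit Cᵀ := (Matrix.isUnit_iff_isUnit_det _).2
    (by rw [Matrix.det_transpose]; exact (Matrix.isUnit_iff_isUnit_det C).1 hC)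
  have hAsym : Aᵀ = A := by
    simpa [Matrix.conjTranspose_eq_transpose_of_trivial] using hA.1.eq
  refine Matrix.PosDef.of_dotProduct_mulVec_pos ?_ (fun x hx => ?_)
  · show (C * A * Cᵀ)ᴴ = _
    simp [Matrix.conjTranspose_mul, Matrix.conjTranspose_eq_transpose_of_trivial,
      hAsym, Matrix.mul_assoc]
  · have hx' : Cᵀ *ᵥ x ≠ 0 := fun h => hx
      (Matrix.mulVec_injective_iff_isUnit.2 hCT (a₂ := 0) (by simpa using h))
    have h2 := hA.dotProduct_mulVec_pos hx'
    have key : star x ⬝ᵥ (C * A * Cᵀ) *ᵥ x = star (Cᵀ *ᵥ x) ⬝ᵥ A *ᵥ (Cᵀ *ᵥ x) := by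
      simp only [star_trivial, ← Matrix.mulVec_mulVec]
      rw [Matrix.dotProduct_mulVec, ← Matrix.mulVec_transpose]
    rw [key]
    exact h2

/-- If `Q = S D S⁻¹` with `D` positive diagonal and `S` invertible, then every
factorization `Q = A B` into symmetric positive definite matrices has the form
`A = S E Sᵀ`, `B = S⁻ᵀ E⁻¹ D S⁻¹` for some positive definite `E` commuting with `D`. -/
theorem posDef_factorization_form {n : Type*} [Fintype n] [DecidableEq n]
    (S : Matrix n n ℝ) (hS : IsUnit S) (d : n → ℝ) (hd : ∀ i, 0 < d i)
    (A B : Matrix n n ℝ) (hA : A.PosDef) (hB : B.PosDef)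
    (hQ : A * B = S * Matrix.diagonal d * S⁻¹) :
    ∃ E : Matrix n n ℝ, E.PosDef ∧ E * Matrix.diagonal d = Matrix.diagonal d * E ∧
      A = S * E * Sᵀ ∧ B = (S⁻¹)ᵀ * E⁻¹ * Matrix.diagonal d * S⁻¹ := by
  have hSd : IsUnit S.det := (Matrix.isUnit_iff_isUnit_det S).1 hS
  have hSi : S⁻¹ * S = 1 := Matrix.nonsing_inv_mul S hSd
  have hSi' : S * S⁻¹ = 1 := Matrix.mul_nonsing_inv S hSd
  have hSinv : IsUnit (S⁻¹) := Matrix.isUnit_nonsing_inv_iff.2 hS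
  set D := Matrix.diagonal d with hD
  set E := S⁻¹ * A * (S⁻¹)ᵀ with hE
  have hEpd : E.PosDef := posDef_conj hA hSinv
  have hST : (S⁻¹)ᵀ * Sᵀ = 1 := by rw [← Matrix.transpose_mul, hSi', Matrix.transpose_one]
  have hTS : Sᵀ * (S⁻¹)ᵀ = 1 := by rw [← Matrix.transpose_mul, hSi, Matrix.transpose_one]
  have hAeq : A = S * E * Sᵀ := by
    rw [hE]
    calc A = (S * S⁻¹) * A * ((S⁻¹)ᵀ * Sᵀ) := by
            rw [hSi', hST, Matrix.one_mul, Matrix.mul_one]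
      _ = S * (S⁻¹ * A * (S⁻¹)ᵀ) * Sᵀ := by noncomm_ring
  have hAd : IsUnit A.det := (Matrix.isUnit_iff_isUnit_det A).1 hA.isUnit
  have hAinv : A⁻¹ * A = 1 := Matrix.nonsing_inv_mul A hAd
  have hBeq : B = A⁻¹ * S * D * S⁻¹ := by
    have := congrArg (fun M => A⁻¹ * M) hQ
    simpa [← Matrix.mul_assoc, hAinv] using this
  have hSTd : IsUnit Sᵀ.det := by rwa [Matrix.det_transpose]
  have hEinv : E⁻¹ = Sᵀ * A⁻¹ * S := by
    rw [hE, Matrix.mul_inv_rev, Matrix.mul_inv_rev, Matrix.transpose_nonsing_inv,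
      Matrix.nonsing_inv_nonsing_inv Sᵀ hSTd, Matrix.nonsing_inv_nonsing_inv S hSd]
    noncomm_ring
  have hBform : B = (S⁻¹)ᵀ * E⁻¹ * D * S⁻¹ := by
    rw [hEinv, hBeq]
    calc A⁻¹ * S * D * S⁻¹ = ((S⁻¹)ᵀ * Sᵀ) * A⁻¹ * S * D * S⁻¹ := by
          rw [hST, Matrix.one_mul]
      _ = (S⁻¹)ᵀ * (Sᵀ * A⁻¹ * S) * D * S⁻¹ := by noncomm_ring
  -- symmetry facts
  have hEsym : Eᵀ = E := by
    have := hEpd.1.eq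
    simpa [Matrix.conjTranspose_eq_transpose_of_trivial] using this
  have hEinvsym : (E⁻¹)ᵀ = E⁻¹ := by
    rw [Matrix.transpose_nonsing_inv, hEsym]
  have hBsym : Bᵀ = B := by
    have := hB.1.eq
    simpa [Matrix.conjTranspose_eq_transpose_of_trivial] using this
  have hDsym : Dᵀ = D := Matrix.diagonal_transpose d
  -- derive commutation of E⁻¹ with D
  have hkey : (S⁻¹)ᵀ * (E⁻¹ * D) * S⁻¹ = (S⁻¹)ᵀ * (D * E⁻¹) * S⁻¹ := by
    have h1 : Bᵀ = (S⁻¹)ᵀ * (D * E⁻¹) * S⁻¹ := by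
      rw [hBform]
      simp only [Matrix.transpose_mul, Matrix.transpose_transpose, hEinvsym, hDsym]
      noncomm_ring
    calc (S⁻¹)ᵀ * (E⁻¹ * D) * S⁻¹ = B := by rw [hBform]; noncomm_ring
      _ = Bᵀ := hBsym.symm
      _ = _ := h1
  have hcomm' : E⁻¹ * D = D * E⁻¹ := by
    have := congrArg (fun M => Sᵀ * M * S) hkey
    simpa [Matrix.mul_assoc, hTS, hSi,
      show ∀ M : Matrix n n ℝ, Sᵀ * ((S⁻¹)ᵀ * M) = M by
        intro M; rw [← Matrix.mul_assoc, hTS, Matrix.one_mul],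
      show ∀ M : Matrix n n ℝ, M * (S⁻¹ * S) = M by
        intro M; rw [hSi, Matrix.mul_one]] using this
  have hEd : IsUnit E.det := (Matrix.isUnit_iff_isUnit_det E).1 hEpd.isUnit
  have hEi : E * E⁻¹ = 1 := Matrix.mul_nonsing_inv E hEd
  have hEi' : E⁻¹ * E = 1 := Matrix.nonsing_inv_mul E hEd
  have hcomm : E * D = D * E := by
    have h : E * (E⁻¹ * D) * E = E * (D * E⁻¹) * E := by rw [hcomm']
    rw [← Matrix.mul_assoc E E⁻¹ D, hEi, Matrix.one_mul] at h
    rw [← Matrix.mul_assoc E D E⁻¹, Matrix.mul_assoc (E * D) E⁻¹ E, hEi',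
      Matrix.mul_one] at h
    exact h.symm
  exact ⟨E, hEpd, hcomm, hAeq, hBform⟩
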